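/- Rothe's summation formula: for all real (or complex) numbers A, B, C with A + Bk ≠ 0 for every integer k with 0 ≤ k ≤ n, and for every nonnegative integer n, one has C(A+C, n) = ∑_{k=0}^{n} (A/(A+Bk)) · C(A+Bk, k) · C(C-Bk, n-k), where C(x, m) = x(x-1)⋯(x-m+1)/m! denotes the generalized binomial coefficient. -/

import Mathlib

noncomputable def genBinom (x : ℂ) (m : ℕ) : ℂ :=
  (∏ i ∈ Finset.range m, (x - i)) / m.factorial

open Finset

lemma fact_ne (m : ℕ) : ((m.factorial : ℂ)) ≠ 0 := by
  exact_mod_cast Nat.cast_ne_zero.mpr m.factorial_ne_zero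

@[simp] lemma genBinom_zero (x : ℂ) : genBinom x 0 = 1 := by simp [genBinom]

lemma succ_ne (m : ℕ) : ((m : ℂ) + 1) ≠ 0 := Nat.cast_add_one_ne_zero m

lemma genBinom_pascal (x : ℂ) (m : ℕ) :
    genBinom (x+1) (m+1) = genBinom x (m+1) + genBinom x m := by
  have h1 : ∏ i ∈ range (m+1), (x + 1 - i) = (x+1) * ∏ i ∈ range m, (x - i) := by
    rw [Finset.prod_range_succ', mul_comm]
    congr 1
    · norm_num
    · apply Finset.prod_congr rfl; intro i _; push_cast; ring
  have h2 : ∏ i ∈ range (m+1), (x - i) = (∏ i ∈ range m, (x - i)) * (x - m) :=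
    Finset.prod_range_succ _ _
  rw [genBinom, genBinom, genBinom, h1, h2, Nat.factorial_succ]
  have hm := succ_ne m
  have hf := fact_ne m
  push_cast
  field_simp
  ring

lemma genBinom_mul_succ (x : ℂ) (m : ℕ) :
    (m+1 : ℂ) * genBinom x (m+1) = x * genBinom (x-1) m := by
  have h1 : ∏ i ∈ range (m+1), (x - i) = x * ∏ i ∈ range m, (x - 1 - i) := by
    rw [Finset.prod_range_succ', mul_comm]
    congr 1
    · norm_num
    · apply Finset.prod_congr rfl; intro i _; push_cast; ring
  rw [genBinom, genBinom, h1, Nat.factorial_succ]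
  have hm := succ_ne m
  have hf := fact_ne m
  push_cast
  field_simp

lemma prod_ident (x : ℂ) {n k : ℕ} (hk : k ≤ n) (hn : 1 ≤ n) :
    (∏ i ∈ range k, (x - i)) * ∏ i ∈ range (n-k), (x + i) =
      x * ∏ j ∈ range (n-1), (x + j + 1 - k) := by
  rcases Nat.eq_zero_or_pos k with hk0 | hk1
  · subst hk0
    obtain ⟨m, rfl⟩ : ∃ m, n = m + 1 := ⟨n - 1, by omega⟩
    simp only [prod_range_zero, one_mul, Nat.sub_zero, Nat.add_sub_cancel, Nat.cast_zero]
    rw [Finset.prod_range_succ']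
    simp only [prod_range_zero, one_mul, Nat.cast_zero, Nat.sub_zero,
      Nat.add_sub_cancel]
    rw [mul_comm]
    congr 1
    · norm_num
    · apply Finset.prod_congr rfl; intro i _; push_cast; ring
  · obtain ⟨l, rfl⟩ : ∃ l, k = l + 1 := ⟨k - 1, by omega⟩
    have hsplit : n - 1 = l + (n - (l+1)) := by omega
    rw [Finset.prod_range_succ', hsplit, Finset.prod_range_add]
    have h1 : ∏ j ∈ range l, (x + ↑j + 1 - (↑(l+1):ℂ)) = ∏ i ∈ range l, (x - (↑i + 1)) := by
      rw [← Finset.prod_range_reflect]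
      apply Finset.prod_congr rfl
      intro j hj
      have hj' := Finset.mem_range.mp hj
      have he : l - 1 - j = l - (j + 1) := by omega
      rw [he]
      have : ((l - (j+1) : ℕ) : ℂ) = (l : ℂ) - (j + 1) := by
        push_cast [Nat.cast_sub (by omega : j + 1 ≤ l)]; ring
      rw [this]
      push_cast
      ring
    have h2 : ∏ i ∈ range (n - (l+1)), (x + ↑(l + i) + 1 - (↑(l+1):ℂ)) =
        ∏ i ∈ range (n - (l+1)), (x + i) := by
      apply Finset.prod_congr rfl; intro i _; push_cast; ring
    rw [h1, h2]
    norm_num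
    ring

lemma genBinom_neg_prod (x : ℂ) {n k : ℕ} (hk : k ≤ n) (hn : 1 ≤ n) :
    genBinom x k * genBinom (-x) (n-k) =
      (-1)^(n-k) * (n.choose k : ℂ) / n.factorial *
        (x * ∏ j ∈ range (n-1), (x + j + 1 - k)) := by
  have hneg : ∏ i ∈ range (n-k), (-x - (i:ℂ)) = (-1)^(n-k) * ∏ i ∈ range (n-k), (x + i) := by
    rw [show ∏ i ∈ range (n-k), (-x - (i:ℂ)) = ∏ i ∈ range (n-k), (-1) * (x + i) from
      Finset.prod_congr rfl (fun i _ => by ring)]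
    rw [Finset.prod_mul_distrib, Finset.prod_const, Finset.card_range]
  have hch : ((n.choose k : ℂ)) * k.factorial * (n-k).factorial = n.factorial := by
    exact_mod_cast congrArg (Nat.cast : ℕ → ℂ) (Nat.choose_mul_factorial_mul_factorial hk)
  unfold genBinom
  rw [hneg, ← prod_ident x hk hn]
  have h1 := fact_ne k
  have h2 := fact_ne (n-k)
  have h3 := fact_ne n
  field_simp
  linear_combination (-1 : ℂ) * ((∏ i ∈ range k, (x - i)) * ∏ i ∈ range (n-k), (x + i)) * hch

lemma telescope (n : ℕ) (f : ℕ → ℂ) :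
    ∑ k ∈ range (n+2), (-1:ℂ)^k * ((n+1).choose k) * f k
      = ∑ k ∈ range (n+1), (-1:ℂ)^k * (n.choose k) * (f k - f (k+1)) := by
  simp only [mul_sub]
  rw [Finset.sum_sub_distrib]
  rw [Finset.sum_range_succ' (fun k => (-1:ℂ)^k * ((n+1).choose k) * f k) (n+1)]
  rw [Finset.sum_range_succ' (fun k => (-1:ℂ)^k * (n.choose k) * f k) n]
  simp only [pow_zero, Nat.choose_zero_right, Nat.cast_one, one_mul]
  have hext : ∑ i ∈ range n, (-1:ℂ)^(i+1) * (n.choose (i+1)) * f (i+1)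
      = ∑ i ∈ range (n+1), (-1:ℂ)^(i+1) * (n.choose (i+1)) * f (i+1) := by
    rw [Finset.sum_range_succ, Nat.choose_succ_self]
    simp
  rw [hext]
  have : ∀ i ∈ range (n+1),
      (-1:ℂ)^(i+1) * (((n+1).choose (i+1) : ℕ) : ℂ) * f (i+1)
        = (-1:ℂ)^(i+1) * ((n.choose (i+1) : ℕ) : ℂ) * f (i+1)
          - (-1:ℂ)^i * ((n.choose i : ℕ) : ℂ) * f (i+1) := by
    intro i _
    rw [Nat.choose_succ_succ]
    push_cast
    ring
  rw [Finset.sum_congr rfl this, Finset.sum_sub_distrib]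
  ring

lemma fd : ∀ (n : ℕ) (p : Polynomial ℂ), p.natDegree ≤ n →
    ∑ k ∈ range (n+1), (-1:ℂ)^k * (n.choose k) * p.eval (k:ℂ)
      = (-1)^n * n.factorial * p.coeff n := by
  intro n
  induction n with
  | zero =>
    intro p hp
    obtain ⟨a, rfl⟩ := Polynomial.natDegree_eq_zero.mp (Nat.le_zero.mp hp)
    simp
  | succ n ih =>
    intro p hp
    set q : Polynomial ℂ :=
      ∑ d ∈ range (n+2), Polynomial.C (p.coeff d) * (Polynomial.X ^ d - (Polynomial.X + 1)^d)
      with hq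
    have hprep : p = ∑ d ∈ range (n+2), Polynomial.C (p.coeff d) * Polynomial.X ^ d := by
      conv_lhs => rw [p.as_sum_range' (n+2) (by omega)]
      exact Finset.sum_congr rfl fun d _ => (Polynomial.C_mul_X_pow_eq_monomial).symm
    have heval : ∀ t : ℂ, q.eval t = p.eval t - p.eval (t+1) := by
      intro t
      conv_rhs => rw [hprep]
      simp [hq, Polynomial.eval_finset_sum]
      rw [← Finset.sum_sub_distrib]
      exact Finset.sum_congr rfl fun d _ => by ring
    have hqcoeff : ∀ m : ℕ, q.coeff m
        = ∑ d ∈ range (n+2), p.coeff d * ((if m = d then 1 else 0) - (d.choose m : ℂ)) := by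
      intro m
      rw [hq]
      rw [Polynomial.finset_sum_coeff]
      exact Finset.sum_congr rfl fun d _ => by
        rw [Polynomial.coeff_C_mul, Polynomial.coeff_sub, Polynomial.coeff_X_pow,
          Polynomial.coeff_X_add_one_pow]
    have hqdeg : q.natDegree ≤ n := by
      apply Polynomial.natDegree_le_iff_coeff_eq_zero.mpr
      intro m hm
      rw [hqcoeff m]
      apply Finset.sum_eq_zero
      intro d hd
      have hd' := Finset.mem_range.mp hd
      rcases eq_or_lt_of_le (show d ≤ m by omega) with h | h
      · subst h; simp
      · rw [Nat.choose_eq_zero_of_lt h]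
        simp [if_neg (by omega : ¬ m = d)]
    have hqc : q.coeff n = -((n+1) * p.coeff (n+1)) := by
      rw [hqcoeff n]
      rw [Finset.sum_eq_single (n+1)]
      · rw [if_neg (by omega), Nat.choose_succ_self_right]
        push_cast; ring
      · intro d hd hne
        have hd' := Finset.mem_range.mp hd
        have hdn : d ≤ n := by omega
        rcases eq_or_lt_of_le hdn with h | h
        · subst h; simp
        · rw [Nat.choose_eq_zero_of_lt h, if_neg (by omega : ¬ n = d)]
          simp
      · intro hmem; exact absurd (Finset.self_mem_range_succ (n+1)) (by simpa using hmem)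
    have step := telescope n (fun k => p.eval (k:ℂ))
    have : ∑ k ∈ range (n+1), (-1:ℂ)^k * (n.choose k) * (p.eval (k:ℂ) - p.eval ((k:ℂ)+1))
        = ∑ k ∈ range (n+1), (-1:ℂ)^k * (n.choose k) * q.eval (k:ℂ) := by
      exact Finset.sum_congr rfl fun k _ => by rw [heval]
    rw [step]
    simp only [Nat.cast_add, Nat.cast_one] at this ⊢
    rw [this, ih q hqdeg, hqc]
    rw [Nat.factorial_succ]
    push_cast
    ring

noncomputable def FF (A B C : ℂ) (n : ℕ) : ℂ :=
  ∑ k ∈ range (n+1), genBinom (A + B*k) k * genBinom (C - B*k) (n-k)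

noncomputable def RRR (A B C : ℂ) (n : ℕ) : ℂ :=
  ∑ j ∈ range (n+1), B^j * genBinom (A + C - j) (n-j)

lemma E1 (A B : ℂ) {n : ℕ} (hn : 1 ≤ n) : FF A B (-A) n = B * (B-1)^(n-1) := by
  set L : ℕ → Polynomial ℂ := fun i =>
    Polynomial.C (if i = 0 then A else A + i) +
      Polynomial.C (if i = 0 then B else B - 1) * Polynomial.X with hL
  set q : Polynomial ℂ := ∏ i ∈ range n, L i with hq
  have hdeg1 : ∀ i, (L i).natDegree ≤ 1 := fun i =>
    le_trans (Polynomial.natDegree_add_le _ _)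
      (max_le (by simp)
        (le_trans (Polynomial.natDegree_C_mul_le _ _) Polynomial.natDegree_X_le))
  have hqdeg : q.natDegree ≤ n := by
    apply le_trans (Polynomial.natDegree_prod_le _ _)
    apply le_trans (Finset.sum_le_card_nsmul _ _ 1 (fun i _ => hdeg1 i))
    simp
  have hcoeff1 : ∀ i, (L i).coeff 1 = (if i = 0 then B else B - 1) := by
    intro i
    simp [hL, Polynomial.coeff_add, Polynomial.coeff_C, Polynomial.coeff_C_mul]
  have hqcoeff : q.coeff n = B * (B-1)^(n-1) := by
    have hcp := Polynomial.coeff_prod_of_natDegree_le (s := range n) (f := L) 1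
      (fun i _ => hdeg1 i)
    rw [Finset.card_range, mul_one] at hcp
    rw [hq, hcp]
    obtain ⟨m, rfl⟩ : ∃ m, n = m + 1 := ⟨n - 1, by omega⟩
    rw [Finset.prod_range_succ']
    simp only [hcoeff1]
    simp
    rw [mul_comm]
  have hqe : ∀ k : ℕ, q.eval (k:ℂ) = (A + B*k) * ∏ j ∈ range (n-1), ((A + B*k) + j + 1 - k) := by
    intro k
    obtain ⟨m, rfl⟩ : ∃ m, n = m + 1 := ⟨n - 1, by omega⟩
    rw [hq, Finset.prod_range_succ', Polynomial.eval_mul, mul_comm]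
    simp only [Nat.add_sub_cancel]
    congr 1
    · simp [hL]
    · rw [Polynomial.eval_prod]
      apply Finset.prod_congr rfl
      intro j _
      simp [hL]
      push_cast
      ring
  have heval : ∀ k : ℕ, k ≤ n →
      genBinom (A + B*k) k * genBinom (-A - B*k) (n-k)
        = (-1:ℂ)^n * ((n.choose k : ℂ) / n.factorial) * ((-1)^k * q.eval (k:ℂ)) := by
    intro k hk
    have hx : -A - B*(k:ℂ) = -(A + B*k) := by ring
    rw [hx, genBinom_neg_prod (A + B*(k:ℂ)) hk hn, hqe k]
    have hsign : (-1:ℂ)^(n-k) = (-1)^n * (-1)^k := by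
      have h1 : n + k = (n-k) + 2*k := by omega
      have h2 : ((-1:ℂ))^(n+k) = (-1)^(n-k) := by
        rw [h1, pow_add, pow_mul]
        norm_num
      rw [← h2, pow_add]
    rw [hsign]
    ring
  have hFF : FF A B (-A) n = ∑ k ∈ range (n+1),
      (-1:ℂ)^n * ((n.choose k : ℂ) / n.factorial) * ((-1)^k * q.eval (k:ℂ)) := by
    rw [FF]
    exact Finset.sum_congr rfl fun k hk =>
      heval k (by have := Finset.mem_range.mp hk; omega)
  rw [hFF]
  have hfd := fd n q hqdeg
  have hfact := fact_ne n
  have hsq : (-1:ℂ)^n * (-1)^n = 1 := by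
    rw [← pow_add, show n + n = 2*n by ring, pow_mul]; norm_num
  calc ∑ k ∈ range (n+1), (-1:ℂ)^n * ((n.choose k : ℂ) / n.factorial) * ((-1)^k * q.eval (k:ℂ))
      = ((-1:ℂ)^n / n.factorial) * ∑ k ∈ range (n+1), (-1:ℂ)^k * (n.choose k) * q.eval (k:ℂ) := by
        rw [Finset.mul_sum]
        exact Finset.sum_congr rfl fun k _ => by ring
    _ = ((-1:ℂ)^n / n.factorial) * ((-1)^n * n.factorial * q.coeff n) := by rw [hfd]
    _ = B * (B-1)^(n-1) := by
        rw [hqcoeff]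
        field_simp
        linear_combination ((B * (B-1)^(n-1))) * hsq

lemma asc_prod (j m : ℕ) : j.ascFactorial m = ∏ i ∈ range m, (j + i) := by
  induction m with
  | zero => simp
  | succ m ih => rw [Finset.prod_range_succ, ← ih, Nat.ascFactorial_succ, mul_comm]

lemma genBinom_neg_nat (j m : ℕ) :
    genBinom (-(j:ℂ)) m = (-1)^m * ((j + m - 1).choose m : ℕ) := by
  have hprod : ∏ i ∈ range m, (-(j:ℂ) - i) = (-1)^m * (j.ascFactorial m : ℕ) := by
    rw [show ∏ i ∈ range m, (-(j:ℂ) - i) = ∏ i ∈ range m, (-1) * ((j:ℂ) + i) from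
      Finset.prod_congr rfl fun i _ => by ring]
    rw [Finset.prod_mul_distrib, Finset.prod_const, Finset.card_range, asc_prod]
    push_cast
    ring
  rw [genBinom, hprod, Nat.ascFactorial_eq_factorial_mul_choose']
  push_cast
  rw [mul_comm ((m.factorial:ℂ)) _, mul_div_assoc, mul_div_cancel_right₀ _ (fact_ne m)]

lemma E2 (A B : ℂ) {n : ℕ} (hn : 1 ≤ n) : RRR A B (-A) n = B * (B-1)^(n-1) := by
  obtain ⟨m, rfl⟩ : ∃ m, n = m + 1 := ⟨n - 1, by omega⟩
  have hterm : ∀ j : ℕ, j ≤ m + 1 →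
      B^j * genBinom (A + -A - (j:ℂ)) (m+1-j)
        = B^j * ((-1:ℂ)^(m+1-j) * ((m).choose (m+1-j) : ℕ)) := by
    intro j hj
    have h1 : A + -A - (j:ℂ) = -(j:ℂ) := by ring
    rw [h1, genBinom_neg_nat j (m+1-j), show j + (m+1-j) - 1 = m from by omega]
  rw [RRR, Finset.sum_congr rfl (fun j hj => hterm j (by
    have := Finset.mem_range.mp hj; omega))]
  rw [Finset.sum_range_succ' _ (m+1)]
  have h0 : B^0 * ((-1:ℂ)^(m+1-0) * ((m).choose (m+1-0) : ℕ)) = 0 := by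
    simp [Nat.choose_eq_zero_of_lt (by omega : m < m + 1)]
  rw [h0, add_zero]
  have hstep : ∀ i ∈ range (m+1),
      B^(i+1) * ((-1:ℂ)^(m+1-(i+1)) * ((m).choose (m+1-(i+1)) : ℕ))
        = B * (B^i * (-1:ℂ)^(m-i) * ((m).choose i : ℕ)) := by
    intro i hi
    have hi' := Finset.mem_range.mp hi
    have h1 : m + 1 - (i+1) = m - i := by omega
    rw [h1, Nat.choose_symm (by omega : i ≤ m)]
    ring
  rw [Finset.sum_congr rfl hstep, ← Finset.mul_sum]
  congr 1
  have := add_pow B (-1 : ℂ) m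
  rw [show B + (-1 : ℂ) = B - 1 from by ring] at this
  rw [← this]
  simp

lemma genBinom_pascal' (x : ℂ) (m : ℕ) :
    genBinom x (m+1) = genBinom (x-1) (m+1) + genBinom (x-1) m := by
  have := genBinom_pascal (x-1) m
  rw [sub_add_cancel] at this
  exact this

lemma FF_rec (A B C : ℂ) (n : ℕ) :
    FF A B C (n+1) = FF A B (C-1) (n+1) + FF A B (C-1) n := by
  rw [FF, FF, FF, Finset.sum_range_succ, Finset.sum_range_succ
    (fun k => genBinom (A + B*k) k * genBinom (C - 1 - B*k) (n+1-k)) (n+1)]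
  have hlast : genBinom (C - B*(↑(n+1):ℂ)) (n+1-(n+1)) = genBinom (C - 1 - B*(↑(n+1):ℂ)) (n+1-(n+1)) := by
    simp
  have hpt : ∀ k ∈ range (n+1),
      genBinom (A + B*k) k * genBinom (C - B*k) (n+1-k)
        = genBinom (A + B*k) k * genBinom (C - 1 - B*k) (n+1-k)
          + genBinom (A + B*k) k * genBinom (C - 1 - B*k) (n-k) := by
    intro k hk
    have hk' := Finset.mem_range.mp hk
    have h2 : n+1-k = (n-k)+1 := by omega
    rw [h2, genBinom_pascal' (C - B*k) (n-k),
      show C - B*(k:ℂ) - 1 = C - 1 - B*k from by ring]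
    ring
  rw [Finset.sum_congr rfl hpt, Finset.sum_add_distrib, hlast]
  ring

lemma RRR_rec (A B C : ℂ) (n : ℕ) :
    RRR A B C (n+1) = RRR A B (C-1) (n+1) + RRR A B (C-1) n := by
  rw [RRR, RRR, RRR, Finset.sum_range_succ, Finset.sum_range_succ
    (fun j => B^j * genBinom (A + (C-1) - j) (n+1-j)) (n+1)]
  have hlast : genBinom (A + C - (↑(n+1):ℂ)) (n+1-(n+1)) = genBinom (A + (C-1) - (↑(n+1):ℂ)) (n+1-(n+1)) := by
    simp
  have hpt : ∀ j ∈ range (n+1),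
      B^j * genBinom (A + C - j) (n+1-j)
        = B^j * genBinom (A + (C-1) - j) (n+1-j)
          + B^j * genBinom (A + (C-1) - j) (n-j) := by
    intro j hj
    have hj' := Finset.mem_range.mp hj
    have h2 : n+1-j = (n-j)+1 := by omega
    rw [h2, genBinom_pascal' (A + C - j) (n-j),
      show A + C - (j:ℂ) - 1 = A + (C-1) - j from by ring]
    ring
  rw [Finset.sum_congr rfl hpt, Finset.sum_add_distrib, hlast]
  ring

noncomputable def gPoly (m : ℕ) (c : ℂ) : Polynomial ℂ :=
  Polynomial.C ((m.factorial : ℂ))⁻¹ * ∏ i ∈ range m, (Polynomial.X + Polynomial.C (c - i))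

lemma gPoly_eval (m : ℕ) (c t : ℂ) : (gPoly m c).eval t = genBinom (t + c) m := by
  rw [gPoly, genBinom, Polynomial.eval_mul, Polynomial.eval_C, Polynomial.eval_prod,
    div_eq_inv_mul]
  congr 1
  apply Finset.prod_congr rfl
  intro i _
  rw [Polynomial.eval_add, Polynomial.eval_X, Polynomial.eval_C]
  ring

theorem FR : ∀ (n : ℕ) (A B C : ℂ), FF A B C n = RRR A B C n := by
  intro n
  induction n with
  | zero => intro A B C; simp [FF, RRR]
  | succ n ih =>
    intro A B C
    set p : Polynomial ℂ :=
      (∑ k ∈ range (n+2), Polynomial.C (genBinom (A + B*k) k) * gPoly (n+1-k) (-(B*k)))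
        - ∑ j ∈ range (n+2), Polynomial.C (B^j) * gPoly (n+1-j) (A - j) with hp
    have hpeval : ∀ t : ℂ, p.eval t = FF A B t (n+1) - RRR A B t (n+1) := by
      intro t
      rw [hp]
      simp only [Polynomial.eval_sub, Polynomial.eval_finset_sum, Polynomial.eval_mul,
        Polynomial.eval_C]
      congr 1
      · rw [FF]
        exact Finset.sum_congr rfl fun k _ => by
          rw [gPoly_eval, show t + -(B*(k:ℂ)) = t - B*k from by ring]
      · rw [RRR]
        exact Finset.sum_congr rfl fun j _ => by
          rw [gPoly_eval, show t + (A - (j:ℂ)) = A + t - j from by ring]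
    have hper : ∀ t : ℂ, p.eval (t-1) = p.eval t := by
      intro t
      rw [hpeval, hpeval, FF_rec A B t n, RRR_rec A B t n, ih A B (t-1)]
      ring
    have hiter : ∀ (m : ℕ) (t : ℂ), p.eval (t - m) = p.eval t := by
      intro m
      induction m with
      | zero => intro t; simp
      | succ m ihm =>
        intro t
        have : t - (↑(m+1):ℂ) = (t - 1) - m := by push_cast; ring
        rw [this, ihm (t-1), hper]
    have hconst : ∀ t : ℂ, p.eval t = p.eval (-A) := by
      intro t
      set q : Polynomial ℂ := p - Polynomial.C (p.eval (-A)) with hqdef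
      have hq0 : q = 0 := by
        apply Polynomial.eq_zero_of_infinite_isRoot
        refine Set.infinite_of_injective_forall_mem
          (f := fun m : ℕ => -A - (m:ℂ)) ?_ ?_
        · intro a b hab
          simp only [sub_right_inj] at hab
          have : (a:ℂ) = b := by exact_mod_cast hab
          exact_mod_cast this
        · intro m
          simp only [Set.mem_setOf_eq, Polynomial.IsRoot, hqdef,
            Polynomial.eval_sub, Polynomial.eval_C]
          rw [hiter m (-A)]
          ring
      have hpc : p = Polynomial.C (p.eval (-A)) := by
        rwa [hqdef, sub_eq_zero] at hq0
      conv_lhs => rw [hpc]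
      simp
    have hzero : p.eval (-A) = 0 := by
      rw [hpeval, E1 A B (by omega : 1 ≤ n+1), E2 A B (by omega : 1 ≤ n+1)]
      ring
    have := hconst C
    rw [hzero, hpeval] at this
    exact sub_eq_zero.mp this

theorem rothe_summation (A B C : ℂ) (n : ℕ) (h : ∀ k ≤ n, A + B * k ≠ 0) :
    genBinom (A + C) n =
      ∑ k ∈ Finset.range (n + 1),
        A / (A + B * k) * genBinom (A + B * k) k * genBinom (C - B * k) (n - k) := by
  have hA : A ≠ 0 := by
    have := h 0 (Nat.zero_le n)
    simpa using this
  rcases n with _ | m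
  · simp [genBinom, div_self hA]
  · have key : ∀ j : ℕ, j + 1 ≤ m + 1 →
        A / (A + B * (↑(j+1):ℂ)) * genBinom (A + B * (↑(j+1):ℂ)) (j+1)
          = genBinom (A + B * (↑(j+1):ℂ)) (j+1) - B * genBinom (A + B * (↑(j+1):ℂ) - 1) j := by
      intro j hj
      have hx : A + B * (↑(j+1):ℂ) ≠ 0 := h (j+1) hj
      have hms := genBinom_mul_succ (A + B * (↑(j+1):ℂ)) j
      rw [div_mul_eq_mul_div, div_eq_iff hx]
      push_cast at hms ⊢
      linear_combination (-B) * hms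
    have step1 : ∑ k ∈ Finset.range (m + 2),
        A / (A + B * k) * genBinom (A + B * k) k * genBinom (C - B * k) (m + 1 - k)
          = FF A B C (m+1) - B * FF (A+B-1) B (C-B) m := by
      rw [Finset.sum_range_succ'
        (fun k => A / (A + B * (k:ℂ)) * genBinom (A + B * k) k * genBinom (C - B * k) (m + 1 - k)) (m+1)]
      rw [FF, Finset.sum_range_succ'
        (fun k => genBinom (A + B * (k:ℂ)) k * genBinom (C - B * k) (m + 1 - k)) (m+1)]
      rw [FF, Finset.mul_sum]
      have hptw : ∀ j ∈ range (m+1),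
          A / (A + B * (↑(j+1):ℂ)) * genBinom (A + B * (↑(j+1):ℂ)) (j+1)
              * genBinom (C - B * (↑(j+1):ℂ)) (m + 1 - (j+1))
            = genBinom (A + B * (↑(j+1):ℂ)) (j+1) * genBinom (C - B * (↑(j+1):ℂ)) (m + 1 - (j+1))
              - B * (genBinom ((A+B-1) + B*(j:ℂ)) j * genBinom ((C-B) - B*(j:ℂ)) (m - j)) := by
        intro j hj
        have hj' := Finset.mem_range.mp hj
        have h1 : m + 1 - (j+1) = m - j := by omega
        have h2 : A + B * (↑(j+1):ℂ) - 1 = (A+B-1) + B*(j:ℂ) := by push_cast; ring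
        have h3 : C - B * (↑(j+1):ℂ) = (C-B) - B*(j:ℂ) := by push_cast; ring
        rw [key j (by omega), h1]
        rw [sub_mul, h2, h3]
        ring
      rw [Finset.sum_congr rfl hptw, Finset.sum_sub_distrib]
      have h0 : A / (A + B * (↑(0:ℕ):ℂ)) * genBinom (A + B * (↑(0:ℕ):ℂ)) 0
          * genBinom (C - B * (↑(0:ℕ):ℂ)) (m + 1 - 0)
            = genBinom (A + B * (↑(0:ℕ):ℂ)) 0 * genBinom (C - B * (↑(0:ℕ):ℂ)) (m + 1 - 0) := by
        simp [div_self hA]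
      rw [h0]
      ring
    rw [step1, FR (m+1) A B C, FR m (A+B-1) B (C-B)]
    rw [RRR, RRR, Finset.sum_range_succ'
      (fun j => B^j * genBinom (A + C - (j:ℂ)) (m + 1 - j)) (m+1), Finset.mul_sum]
    have hptw2 : ∀ i ∈ range (m+1),
        B^(i+1) * genBinom (A + C - (↑(i+1):ℂ)) (m + 1 - (i+1))
          = B * (B^i * genBinom ((A+B-1) + (C-B) - (i:ℂ)) (m - i)) := by
      intro i hi
      have hi' := Finset.mem_range.mp hi
      have h1 : m + 1 - (i+1) = m - i := by omega
      have h2 : A + C - (↑(i+1):ℂ) = (A+B-1) + (C-B) - (i:ℂ) := by push_cast; ring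
      rw [h1, h2]
      ring
    rw [Finset.sum_congr rfl hptw2]
    simp
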